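/- Let N ≥ 1 and let G be a connected simple graph on the vertex set {1, …, N+1}, with Laplacian matrix L̄ over ℝ. Then the N×N matrix H obtained from L̄ by deleting the row and column indexed by vertex N+1 is symmetric positive definite. -/

import Mathlib

open Matrix
lemma quad_ext (N : ℕ) (L : Matrix (Fin (N+1)) (Fin (N+1)) ℝ) (x : Fin N → ℝ) :
    x ⬝ᵥ (L.submatrix Fin.castSucc Fin.castSucc) *ᵥ x =
      (Fin.snoc x 0 : Fin (N+1) → ℝ) ⬝ᵥ L *ᵥ (Fin.snoc x 0) := by
  simp only [dotProduct, Matrix.mulVec, Matrix.submatrix_apply]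
  rw [Fin.sum_univ_castSucc]
  simp only [Fin.snoc_last, zero_mul, add_zero]
  congr 1
  ext i
  simp only [Fin.snoc_castSucc]
  congr 1
  rw [Fin.sum_univ_castSucc]
  simp [Fin.snoc_last, Fin.snoc_castSucc]

/-- for a connected simple graph on `{1, …, N+1}` with Laplacian matrix
`L̄` over `ℝ`, the `N×N` matrix `H` obtained from `L̄` by deleting the row and column of
vertex `N+1` is symmetric positive definite. -/
theorem stmt_16 (N : ℕ) (hN : 1 ≤ N)
    (G : SimpleGraph (Fin (N + 1))) [DecidableRel G.Adj] (hG : G.Connected) :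
    ((G.lapMatrix ℝ).submatrix Fin.castSucc Fin.castSucc).IsSymm ∧
      ((G.lapMatrix ℝ).submatrix Fin.castSucc Fin.castSucc).PosDef := by
  have hsymm : ((G.lapMatrix ℝ).submatrix Fin.castSucc Fin.castSucc).IsSymm := by
    have := G.isSymm_lapMatrix (R := ℝ)
    ext i j
    simp only [Matrix.transpose_apply, Matrix.submatrix_apply]
    exact congrFun (congrFun this _) _
  refine ⟨hsymm, Matrix.posDef_iff_dotProduct_mulVec.mpr ⟨?_, ?_⟩⟩
  · rw [Matrix.IsHermitian, Matrix.conjTranspose_eq_transpose_of_trivial, hsymm]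
  · intro x hx
    have key : x ⬝ᵥ ((G.lapMatrix ℝ).submatrix Fin.castSucc Fin.castSucc) *ᵥ x =
        Matrix.toLinearMap₂' ℝ (G.lapMatrix ℝ) (Fin.snoc x 0) (Fin.snoc x 0) := by
      rw [quad_ext, Matrix.toLinearMap₂'_apply']
    have hpsd := G.posSemidef_lapMatrix ℝ
    have hnn : 0 ≤ x ⬝ᵥ ((G.lapMatrix ℝ).submatrix Fin.castSucc Fin.castSucc) *ᵥ x := by
      rw [quad_ext]
      simpa using hpsd.dotProduct_mulVec_nonneg (Fin.snoc x 0)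
    rcases lt_or_eq_of_le hnn with h | h
    · simpa using h
    · exfalso
      have h0 : Matrix.toLinearMap₂' ℝ (G.lapMatrix ℝ) (Fin.snoc x 0) (Fin.snoc x 0) = 0 := by
        rw [← key, ← h]
      rw [G.lapMatrix_toLinearMap₂'_apply'_eq_zero_iff_forall_reachable] at h0
      apply hx
      ext i
      have := h0 (Fin.castSucc i) (Fin.last N) (hG.preconnected _ _)
      simpa using this
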